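/- Let α be the real root of t³−5t²+6t−1 with α ≈ 3.24698 (α = [3]_7+[5]_7). Let D = 49(7+15[3]_7+12[5]_7). Then for d = 3+4α, the number D/d² is not the largest among its Galois conjugates: D/d² ≈ 8.2884 while one of its conjugates is ≈ 328.5234. In particular, D/d² is not the Frobenius–Perron dimension of any finite tensor category. -/

import Mathlib

open Real

/-- The quantum number `[k]_7 = sin(kπ/7)/sin(π/7)`. -/
noncomputable def qnum7 (k : ℕ) : ℝ := sin (k * π / 7) / sin (π / 7)

/-- `α = [3]_7 + [5]_7`. -/
noncomputable def alpha : ℝ := qnum7 3 + qnum7 5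

/-- The Galois conjugates of `D/d²`, where `D = 49(7+15[3]_7+12[5]_7)` and
`d = 3 + 4α`, expressed via the conjugates `c = 2cos(kπ/7)` (`k = 1, 3, 5`)
of `2cos(π/7)`: under the embedding sending `2cos(π/7)` to `c` one has
`[3]_7 ↦ c² - 1`, `[5]_7 ↦ c`, `α ↦ c² + c - 1`. -/
noncomputable def ratioConj (c : ℝ) : ℝ :=
  (49 * (7 + 15 * (c ^ 2 - 1) + 12 * c)) / (3 + 4 * (c ^ 2 + c - 1)) ^ 2

/-- `2cos(kπ/7)` for `k = 1, 3, 5` satisfies `x³ - x² - 2x + 1 = 0`. -/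
lemma cubic_of_conj (θ : ℝ) (h4 : cos (4*θ) = -cos (3*θ)) (hne : cos θ ≠ -1) :
    (2*cos θ)^3 - (2*cos θ)^2 - 2*(2*cos θ) + 1 = 0 := by
  set x := cos θ with hx
  have e4 : cos (4*θ) = 2*(2*x^2-1)^2 - 1 := by
    rw [show (4:ℝ)*θ = 2*(2*θ) by ring, Real.cos_two_mul, Real.cos_two_mul]
  have e3 : cos (3*θ) = 4*x^3 - 3*x := Real.cos_three_mul θ
  have key : (x + 1) * (8*x^3 - 4*x^2 - 4*x + 1) = 0 := by
    rw [e4, e3] at h4; nlinarith [h4]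
  rcases mul_eq_zero.1 key with h | h
  · exact absurd (by linarith) hne
  · nlinarith [h]

lemma c1_bounds : 9/5 < 2*cos (π/7) ∧ 2*cos (π/7) < 181/100 := by
  have hpi := Real.pi_pos
  have hcoarse1 : cos (π/3) ≤ cos (π/7) :=
    Real.cos_le_cos_of_nonneg_of_le_pi (by positivity) (by linarith) (by linarith)
  rw [Real.cos_pi_div_three] at hcoarse1
  have hcoarse2 : cos (π/7) ≤ 1 := Real.cos_le_one _
  have hne : cos (π/7) ≠ -1 := by intro h; rw [h] at hcoarse1; norm_num at hcoarse1
  have hcub := cubic_of_conj (π/7) (by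
    rw [show (4:ℝ)*(π/7) = π - 3*(π/7) by ring, Real.cos_pi_sub]) hne
  set c := 2*cos (π/7) with hc
  have hb1 : 1 ≤ c := by rw [hc]; linarith
  have hb2 : c ≤ 2 := by rw [hc]; linarith
  constructor
  · have hq : (c - 9/5) * (c^2 + (4/5)*c - 14/25) = 1/125 := by linear_combination hcub
    nlinarith [hq, sq_nonneg (c-1)]
  · have hq : (c - 181/100) * (c^2 + (81/100)*c - 5339/10000) = -(33641/1000000) := by
      linear_combination hcub
    nlinarith [hq, sq_nonneg (c-1)]

lemma c5_bounds : -5/4 < 2*cos (5*π/7) ∧ 2*cos (5*π/7) < -31/25 := by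
  have hpi := Real.pi_pos
  have hcoarse1 : cos (5*π/7) ≤ cos (π/2) :=
    Real.cos_le_cos_of_nonneg_of_le_pi (by positivity) (by linarith) (by linarith)
  rw [Real.cos_pi_div_two] at hcoarse1
  have hgt : -1 < cos (5*π/7) := by
    have := Real.cos_lt_cos_of_nonneg_of_le_pi (by positivity : (0:ℝ) ≤ 5*π/7)
      (le_refl π) (by linarith)
    simpa using this
  have hne : cos (5*π/7) ≠ -1 := by intro h; rw [h] at hgt; norm_num at hgt
  have hcub := cubic_of_conj (5*π/7) (by
    rw [show (4:ℝ)*(5*π/7) = (π - π/7) + 2*π by ring,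
        show (3:ℝ)*(5*π/7) = (π/7) + 2*π by ring,
        Real.cos_add_two_pi, Real.cos_add_two_pi, Real.cos_pi_sub]) hne
  set c := 2*cos (5*π/7) with hc
  have hb1 : -2 ≤ c := by rw [hc]; linarith
  have hb2 : c ≤ 0 := by rw [hc]; linarith
  constructor
  · have hq : (c + 5/4) * (c^2 - (9/4)*c + 13/16) = 1/64 := by linear_combination hcub
    nlinarith [hq, sq_nonneg c]
  · have hq : (c + 31/25) * (c^2 - (56/25)*c + 486/625) = -(559/15625) := by
      linear_combination hcub
    nlinarith [hq, sq_nonneg c]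

lemma qnum_eqs : qnum7 5 = 2 * cos (π/7) ∧ qnum7 3 = (2*cos (π/7))^2 - 1 := by
  have hpi := Real.pi_pos
  have hs : 0 < sin (π/7) := Real.sin_pos_of_pos_of_lt_pi (by positivity) (by linarith)
  have hsc := Real.sin_sq_add_cos_sq (π/7)
  constructor
  · rw [qnum7]
    push_cast
    rw [show (5:ℝ)*π/7 = π - 2*(π/7) by ring, Real.sin_pi_sub, Real.sin_two_mul]
    field_simp
  · rw [qnum7]
    push_cast
    rw [show (3:ℝ)*π/7 = 3*(π/7) by ring, Real.sin_three_mul]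
    field_simp
    linear_combination (-4) * hsc

/-- For `d = 3 + 4α`, the number `D/d²` (`≈ 8.2884`) is not the largest among
its Galois conjugates: some conjugate (`≈ 328.5234`) is strictly larger.  In
particular `D/d²` is not the Frobenius–Perron dimension of a finite tensor
category. -/
theorem stmt13 :
    ratioConj (2 * cos (π / 7)) =
      (49 * (7 + 15 * qnum7 3 + 12 * qnum7 5)) / (3 + 4 * alpha) ^ 2 ∧
    (ratioConj (2 * cos (3 * π / 7)) > ratioConj (2 * cos (π / 7)) ∨
      ratioConj (2 * cos (5 * π / 7)) > ratioConj (2 * cos (π / 7))) := by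
  obtain ⟨h5, h3⟩ := qnum_eqs
  constructor
  · rw [ratioConj, alpha, h3, h5]
    ring_nf
  · right
    obtain ⟨h1a, h1b⟩ := c1_bounds
    obtain ⟨h5a, h5b⟩ := c5_bounds
    set c1 := 2*cos (π/7) with hc1
    set c5 := 2*cos (5*π/7) with hc5
    have hd1 : (0:ℝ) < 3 + 4*(c1^2 + c1 - 1) := by nlinarith
    have hd5 : (0:ℝ) < 3 + 4*(c5^2 + c5 - 1) := by nlinarith
    have r1 : ratioConj c1 < 9 := by
      rw [ratioConj, div_lt_iff₀ (by positivity)]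
      nlinarith [mul_pos (show (0:ℝ) < c1 - 9/5 by linarith)
        (show (0:ℝ) < 181/100 - c1 by linarith), sq_nonneg (c1 - 9/5)]
    have r5 : 9 < ratioConj c5 := by
      rw [ratioConj, lt_div_iff₀ (by positivity)]
      nlinarith [mul_pos (show (0:ℝ) < c5 + 5/4 by linarith)
        (show (0:ℝ) < -31/25 - c5 by linarith), sq_nonneg (c5 + 5/4)]
    exact lt_trans r1 r5
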